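/- Let V be a finite type, c : V → V → ℝ≥0 a capacity function, S ⊆ V a subset, P ≥ 1 an integer, and s, t distinct vertices of V with s ∉ S and t ∉ S. Let c_s : V → V → ℝ≥0 be a sibling capacity function with c_s u v = 0 unless u ∈ S and v ∈ S, and for all u, v ∈ S let σ_{u,v} : Fin P ≃ Fin P be a bijection. Then the maximum s-t flow value of the P-fold sibling replication of S equals the maximum s-t flow value of the capacity function c'' on V defined by c'' u v = P · (c u v + c_s u v) if u ∈ S or v ∈ S, and c'' u v = c u v otherwise. -/

import Mathlib

/-!
STATEMENT 12: The maximum s-t flow value of the P-fold sibling replication of `S` equals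
the maximum s-t flow value of the capacity `c''` with `c'' u v = P·(c u v + cs u v)` if
`u ∈ S` or `v ∈ S`, and `c'' u v = c u v` otherwise.
-/

open Finset

attribute [local instance] Classical.propDecidable

noncomputable section

/-- `f` is an `s`-`t` flow for the capacity function `c`. -/
def IsFlow {W : Type*} [Fintype W] (c : W → W → NNReal) (s t : W) (f : W → W → ℝ) : Prop :=
  (∀ u v, 0 ≤ f u v ∧ f u v ≤ (c u v : ℝ)) ∧
  ∀ v, v ≠ s → v ≠ t → (∑ u, f u v) = (∑ w, f v w)

/-- The value of a flow `f` with source `s`. -/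
def flowValue {W : Type*} [Fintype W] (f : W → W → ℝ) (s : W) : ℝ :=
  (∑ w, f s w) - (∑ u, f u s)

/-- The maximum `s`-`t` flow value (the greatest value attained by an `s`-`t` flow). -/
def maxFlowValue {W : Type*} [Fintype W] (c : W → W → NNReal) (s t : W) : ℝ :=
  sSup {μ : ℝ | ∃ f, IsFlow c s t f ∧ flowValue f s = μ}

/-- The capacity function of the `P`-fold sibling replication of `S`, with sibling
capacities `cs` and sibling bijections `σ`. -/
def sibRepCap {V : Type*} (c cs : V → V → NNReal) (S : Set V) (P : ℕ)
    (σ : ↥S → ↥S → (Fin P ≃ Fin P)) :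
    ({v : V // v ∉ S} ⊕ (↥S × Fin P)) → ({v : V // v ∉ S} ⊕ (↥S × Fin P)) → NNReal
  | Sum.inl u, Sum.inl v => c u.1 v.1
  | Sum.inl u, Sum.inr (v, _) => c u.1 v.1
  | Sum.inr (v, _), Sum.inl u => c v.1 u.1
  | Sum.inr (u, i), Sum.inr (v, j) =>
      (if i = j then c u.1 v.1 else 0) + (if j = σ u v i then cs u.1 v.1 else 0)

set_option linter.unusedSectionVars false

section helpers

variable {V : Type*} [Fintype V] {S : Set V} {P : ℕ}

/-- Sum of `X` over all lifts of `u` in the replicated vertex type. -/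
def liftSum (S : Set V) (P : ℕ) (u : V)
    (X : ({v : V // v ∉ S} ⊕ (↥S × Fin P)) → ℝ) : ℝ :=
  if hu : u ∈ S then ∑ i : Fin P, X (Sum.inr (⟨u, hu⟩, i)) else X (Sum.inl ⟨u, hu⟩)

lemma sum_subtype_split (h : V → ℝ) :
    (∑ u : ↥S, h u.1) + ∑ u : {v : V // v ∉ S}, h u.1 = ∑ u, h u :=
  Fintype.sum_subtype_add_sum_subtype _ _

lemma sum_liftSum (X : ({v : V // v ∉ S} ⊕ (↥S × Fin P)) → ℝ) :
    ∑ u : V, liftSum S P u X = ∑ a, X a := by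
  rw [← sum_subtype_split (fun u => liftSum S P u X), Fintype.sum_sum_type,
    Fintype.sum_prod_type, add_comm]
  congr 1
  · exact Fintype.sum_congr _ _ fun u => by simp [liftSum, u.2]
  · exact Fintype.sum_congr _ _ fun u => by simp [liftSum, u.2]

lemma liftSum_finsum {ι : Type*} (s : Finset ι) (u : V)
    (X : ι → ({v : V // v ∉ S} ⊕ (↥S × Fin P)) → ℝ) :
    ∑ x ∈ s, liftSum S P u (X x) = liftSum S P u (fun a => ∑ x ∈ s, X x a) := by
  unfold liftSum
  split
  · exact Finset.sum_comm
  · rfl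

lemma ratio_bound (a b x : ℝ) (ha : 0 ≤ a) (hb : 0 ≤ b) (hx0 : 0 ≤ x) (hx : x ≤ a + b) :
    (if a + b = 0 then (0:ℝ) else a/(a+b)) * x ≤ a ∧
      (1 - (if a + b = 0 then (0:ℝ) else a/(a+b))) * x ≤ b := by
  by_cases h : a + b = 0
  · have hx0' : x = 0 := le_antisymm (h ▸ hx) hx0
    simp [h, hx0', ha, hb]
  · rw [if_neg h]
    constructor
    · have h1 : a/(a+b) * x ≤ a/(a+b) * (a+b) :=
        mul_le_mul_of_nonneg_left hx (div_nonneg ha (by positivity))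
      rwa [div_mul_cancel₀ _ h] at h1
    · have h2 : 1 - a/(a+b) = b/(a+b) := by field_simp; ring
      rw [h2]
      have h1 : b/(a+b) * x ≤ b/(a+b) * (a+b) :=
        mul_le_mul_of_nonneg_left hx (div_nonneg hb (by positivity))
      rwa [div_mul_cancel₀ _ h] at h1

lemma ratio_nonneg (a b : ℝ) (ha : 0 ≤ a) (hb : 0 ≤ b) :
    0 ≤ (if a + b = 0 then (0:ℝ) else a/(a+b)) ∧
      (if a + b = 0 then (0:ℝ) else a/(a+b)) ≤ 1 := by
  split
  · norm_num
  · constructor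
    · positivity
    · rw [div_le_one (by rcases (add_nonneg ha hb).lt_or_eq with h|h; exacts [h, absurd h.symm ‹_›])]
      linarith

/-- The reweighted capacity. -/
def reweightCap (c cs : V → V → NNReal) (S : Set V) (P : ℕ) : V → V → NNReal :=
  fun u v => if u ∈ S ∨ v ∈ S then (P : NNReal) * (c u v + cs u v) else c u v

lemma collapse_flow (c cs : V → V → NNReal) (P : ℕ)
    (σ : ↥S → ↥S → (Fin P ≃ Fin P))
    (s t : V) (hst : s ≠ t) (hs : s ∉ S) (ht : t ∉ S)
    (f : ({v : V // v ∉ S} ⊕ (↥S × Fin P)) → ({v : V // v ∉ S} ⊕ (↥S × Fin P)) → ℝ)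
    (hf : IsFlow (sibRepCap c cs S P σ) (Sum.inl ⟨s, hs⟩) (Sum.inl ⟨t, ht⟩) f) :
    ∃ g, IsFlow (reweightCap c cs S P) s t g ∧
      flowValue g s = flowValue f (Sum.inl ⟨s, hs⟩) := by
  obtain ⟨hb, hcons⟩ := hf
  set g : V → V → ℝ := fun u v => liftSum S P u (fun a => liftSum S P v (fun b => f a b))
    with hg
  -- column sums
  have hcol : ∀ v : V, ∑ u, g u v = liftSum S P v (fun b => ∑ a, f a b) := by
    intro v
    rw [hg]
    rw [sum_liftSum (fun a => liftSum S P v (fun b => f a b)),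
      liftSum_finsum Finset.univ v (fun a b => f a b)]
  have hrow : ∀ v : V, ∑ w, g v w = liftSum S P v (fun a => ∑ b, f a b) := by
    intro v
    calc ∑ w, g v w = ∑ w, liftSum S P v (fun a => liftSum S P w (fun b => f a b)) := rfl
      _ = liftSum S P v (fun a => ∑ w, liftSum S P w (fun b => f a b)) :=
          liftSum_finsum Finset.univ v _
      _ = liftSum S P v (fun a => ∑ b, f a b) := by
          congr 1; funext a'; exact sum_liftSum (fun b => f a' b)
  refine ⟨g, ⟨?_, ?_⟩, ?_⟩
  · -- capacity bounds
    intro u v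
    rw [hg]
    constructor
    · simp only [liftSum]
      split
      · refine Finset.sum_nonneg fun i _ => ?_
        split
        · exact Finset.sum_nonneg fun j _ => (hb _ _).1
        · exact (hb _ _).1
      · split
        · exact Finset.sum_nonneg fun j _ => (hb _ _).1
        · exact (hb _ _).1
    · simp only [liftSum, reweightCap]
      by_cases hu : u ∈ S <;> by_cases hv : v ∈ S
      · rw [dif_pos hu, if_pos (Or.inl hu)]
        simp only [dif_pos hv]
        have hbound : ∀ i : Fin P, ∑ j : Fin P, f (Sum.inr (⟨u, hu⟩, i)) (Sum.inr (⟨v, hv⟩, j))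
            ≤ (c u v : ℝ) + cs u v := by
          intro i
          calc ∑ j : Fin P, f (Sum.inr (⟨u, hu⟩, i)) (Sum.inr (⟨v, hv⟩, j))
              ≤ ∑ j : Fin P,
                ((if i = j then (c u v : ℝ) else 0) +
                  (if j = σ ⟨u, hu⟩ ⟨v, hv⟩ i then (cs u v : ℝ) else 0)) := by
                refine Finset.sum_le_sum fun j _ => ?_
                refine le_trans (hb _ _).2 (le_of_eq ?_)
                simp only [sibRepCap]
                push_cast
                congr 1 <;> split <;> simp
            _ = (c u v : ℝ) + cs u v := by
                rw [Finset.sum_add_distrib, Finset.sum_ite_eq Finset.univ i fun _ => (c u v : ℝ),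
                  Finset.sum_ite_eq' Finset.univ (σ ⟨u, hu⟩ ⟨v, hv⟩ i) fun _ => (cs u v : ℝ)]
                simp
        calc ∑ i : Fin P, ∑ j : Fin P, f (Sum.inr (⟨u, hu⟩, i)) (Sum.inr (⟨v, hv⟩, j))
            ≤ ∑ _i : Fin P, ((c u v : ℝ) + cs u v) := Finset.sum_le_sum fun i _ => hbound i
          _ = ((P : NNReal) * (c u v + cs u v) : NNReal) := by
              push_cast
              rw [Finset.sum_const, Finset.card_univ, Fintype.card_fin, nsmul_eq_mul]
      · rw [dif_pos hu, if_pos (Or.inl hu)]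
        simp only [dif_neg hv]
        calc ∑ i : Fin P, f (Sum.inr (⟨u, hu⟩, i)) (Sum.inl ⟨v, hv⟩)
            ≤ ∑ _i : Fin P, (c u v : ℝ) := by
              refine Finset.sum_le_sum fun i _ => le_trans (hb _ _).2 (le_of_eq ?_)
              simp [sibRepCap]
          _ ≤ ((P : NNReal) * (c u v + cs u v) : NNReal) := by
              push_cast
              rw [Finset.sum_const, Finset.card_univ, Fintype.card_fin, nsmul_eq_mul]
              have : (0:ℝ) ≤ (P : ℝ) * (cs u v : ℝ) := by positivity
              nlinarith [NNReal.coe_nonneg (c u v), NNReal.coe_nonneg (cs u v)]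
      · rw [dif_neg hu, if_pos (Or.inr hv)]
        simp only [dif_pos hv]
        calc ∑ i : Fin P, f (Sum.inl ⟨u, hu⟩) (Sum.inr (⟨v, hv⟩, i))
            ≤ ∑ _i : Fin P, (c u v : ℝ) := by
              refine Finset.sum_le_sum fun i _ => le_trans (hb _ _).2 (le_of_eq ?_)
              simp [sibRepCap]
          _ ≤ ((P : NNReal) * (c u v + cs u v) : NNReal) := by
              push_cast
              rw [Finset.sum_const, Finset.card_univ, Fintype.card_fin, nsmul_eq_mul]
              nlinarith [NNReal.coe_nonneg (c u v), NNReal.coe_nonneg (cs u v),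
                Nat.cast_nonneg (α := ℝ) P]
      · rw [dif_neg hu, if_neg (by tauto)]
        simp only [dif_neg hv]
        exact le_trans (hb _ _).2 (le_of_eq (by simp [sibRepCap]))
  · -- conservation
    intro v hvs hvt
    rw [hcol v, hrow v]
    unfold liftSum
    split
    · refine Finset.sum_congr rfl fun i _ => ?_
      exact hcons _ (by simp) (by simp)
    · refine hcons _ ?_ ?_
      · intro h
        exact hvs (congrArg Subtype.val (Sum.inl.inj h))
      · intro h
        exact hvt (congrArg Subtype.val (Sum.inl.inj h))
  · -- value
    unfold flowValue
    rw [hcol s, hrow s]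
    unfold liftSum
    rw [dif_neg hs, dif_neg hs]


/-- ratio c/(c+cs). -/
def ratio (a b : NNReal) : ℝ := if (a:ℝ) + (b:ℝ) = 0 then 0 else (a:ℝ)/((a:ℝ) + b)

/-- The lift of a flow `g` to the replicated graph. -/
def liftFlow (c cs : V → V → NNReal) (S : Set V) (P : ℕ)
    (σ : ↥S → ↥S → (Fin P ≃ Fin P)) (g : V → V → ℝ) :
    ({v : V // v ∉ S} ⊕ (↥S × Fin P)) → ({v : V // v ∉ S} ⊕ (↥S × Fin P)) → ℝ
  | Sum.inl u, Sum.inl v => g u.1 v.1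
  | Sum.inl u, Sum.inr (v, _) => g u.1 v.1 / P
  | Sum.inr (v, _), Sum.inl u => g v.1 u.1 / P
  | Sum.inr (u, i), Sum.inr (v, j) =>
      (if i = j then ratio (c u.1 v.1) (cs u.1 v.1) * (g u.1 v.1 / P) else 0) +
      (if j = σ u v i then (1 - ratio (c u.1 v.1) (cs u.1 v.1)) * (g u.1 v.1 / P) else 0)

lemma lift_flow (c cs : V → V → NNReal) (P : ℕ) (hP : 1 ≤ P)
    (σ : ↥S → ↥S → (Fin P ≃ Fin P))
    (s t : V) (hst : s ≠ t) (hs : s ∉ S) (ht : t ∉ S)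
    (hcs : ∀ u v, ¬(u ∈ S ∧ v ∈ S) → cs u v = 0)
    (g : V → V → ℝ) (hg : IsFlow (reweightCap c cs S P) s t g) :
    ∃ f, IsFlow (sibRepCap c cs S P σ) (Sum.inl ⟨s, hs⟩) (Sum.inl ⟨t, ht⟩) f ∧
      flowValue f (Sum.inl ⟨s, hs⟩) = flowValue g s := by
  obtain ⟨hb, hcons⟩ := hg
  have hPpos : (0:ℝ) < P := by exact_mod_cast Nat.lt_of_lt_of_le Nat.zero_lt_one hP
  have hPne : (P:ℝ) ≠ 0 := ne_of_gt hPpos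
  have hg0 : ∀ u v, 0 ≤ g u v := fun u v => (hb u v).1
  have hxS : ∀ u v : V, (u ∈ S ∨ v ∈ S) → g u v / P ≤ (c u v : ℝ) + cs u v := by
    intro u v h
    rw [div_le_iff₀ hPpos]
    have h2 := (hb u v).2
    simp only [reweightCap] at h2
    rw [if_pos h] at h2
    push_cast at h2
    linarith
  set f := liftFlow c cs S P σ g with hf
  -- column sums at non-replicated vertices
  have hcolV : ∀ v : {x : V // x ∉ S}, ∑ a, f a (Sum.inl v) = ∑ u, g u v.1 := by
    intro v
    rw [Fintype.sum_sum_type, Fintype.sum_prod_type]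
    simp only [hf, liftFlow]
    have h1 : ∀ u : ↥S, ∑ _i : Fin P, (g u.1 v.1 / P) = g u.1 v.1 := by
      intro u
      rw [Finset.sum_const, Finset.card_univ, Fintype.card_fin, nsmul_eq_mul,
        mul_div_cancel₀ _ hPne]
    rw [Finset.sum_congr rfl fun u _ => h1 u, add_comm]
    exact sum_subtype_split fun u => g u v.1
  have hrowV : ∀ v : {x : V // x ∉ S}, ∑ b, f (Sum.inl v) b = ∑ w, g v.1 w := by
    intro v
    rw [Fintype.sum_sum_type, Fintype.sum_prod_type]
    simp only [hf, liftFlow]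
    have h1 : ∀ u : ↥S, ∑ _i : Fin P, (g v.1 u.1 / P) = g v.1 u.1 := by
      intro u
      rw [Finset.sum_const, Finset.card_univ, Fintype.card_fin, nsmul_eq_mul,
        mul_div_cancel₀ _ hPne]
    rw [Finset.sum_congr rfl fun u _ => h1 u, add_comm]
    exact sum_subtype_split fun u => g v.1 u
  -- column sums at replicated vertices
  have hcolS : ∀ (v : ↥S) (i : Fin P), ∑ a, f a (Sum.inr (v, i)) = (∑ u, g u v.1) / P := by
    intro v i
    rw [Fintype.sum_sum_type, Fintype.sum_prod_type]
    simp only [hf, liftFlow]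
    have h1 : ∀ u : ↥S,
        ∑ j : Fin P, ((if j = i then ratio (c u.1 v.1) (cs u.1 v.1) * (g u.1 v.1 / P) else 0) +
          (if i = σ u v j then (1 - ratio (c u.1 v.1) (cs u.1 v.1)) * (g u.1 v.1 / P) else 0)) =
        g u.1 v.1 / P := by
      intro u
      rw [Finset.sum_add_distrib,
        Finset.sum_ite_eq' Finset.univ i
          (fun _ => ratio (c u.1 v.1) (cs u.1 v.1) * (g u.1 v.1 / P)),
        Finset.sum_eq_single ((σ u v).symm i)]
      · rw [if_pos (Finset.mem_univ i), if_pos (Equiv.apply_symm_apply (σ u v) i).symm]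
        ring
      · intro b _ hbne
        rw [if_neg]
        intro h
        exact hbne (by rw [h, Equiv.symm_apply_apply])
      · intro h
        exact absurd (Finset.mem_univ _) h
    rw [Finset.sum_congr rfl fun u _ => h1 u, add_comm, ← Finset.sum_div, ← Finset.sum_div,
      ← add_div, sum_subtype_split fun u => g u v.1]
  have hrowS : ∀ (v : ↥S) (i : Fin P), ∑ b, f (Sum.inr (v, i)) b = (∑ w, g v.1 w) / P := by
    intro v i
    rw [Fintype.sum_sum_type, Fintype.sum_prod_type]
    simp only [hf, liftFlow]
    have h1 : ∀ u : ↥S,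
        ∑ j : Fin P, ((if i = j then ratio (c v.1 u.1) (cs v.1 u.1) * (g v.1 u.1 / P) else 0) +
          (if j = σ v u i then (1 - ratio (c v.1 u.1) (cs v.1 u.1)) * (g v.1 u.1 / P) else 0)) =
        g v.1 u.1 / P := by
      intro u
      rw [Finset.sum_add_distrib,
        Finset.sum_ite_eq Finset.univ i
          (fun _ => ratio (c v.1 u.1) (cs v.1 u.1) * (g v.1 u.1 / P)),
        Finset.sum_ite_eq' Finset.univ (σ v u i)
          (fun _ => (1 - ratio (c v.1 u.1) (cs v.1 u.1)) * (g v.1 u.1 / P))]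
      rw [if_pos (Finset.mem_univ i), if_pos (Finset.mem_univ _)]
      ring
    rw [Finset.sum_congr rfl fun u _ => h1 u, add_comm, ← Finset.sum_div, ← Finset.sum_div,
      ← add_div, sum_subtype_split fun w => g v.1 w]
  refine ⟨f, ⟨?_, ?_⟩, ?_⟩
  · -- capacity bounds
    rintro (u | ⟨u, i⟩) (v | ⟨v, j⟩)
    · constructor
      · exact hg0 u.1 v.1
      · have h2 := (hb u.1 v.1).2
        simp only [reweightCap] at h2
        rw [if_neg (fun h => h.elim u.2 v.2)] at h2
        simpa [hf, liftFlow, sibRepCap] using h2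
    · constructor
      · simp only [hf, liftFlow]
        exact div_nonneg (hg0 _ _) hPpos.le
      · have h0 : (cs u.1 v.1 : ℝ) = 0 := by
          rw [hcs u.1 v.1 (fun h => u.2 h.1)]; simp
        have hx := hxS u.1 v.1 (Or.inr v.2)
        simp only [hf, liftFlow, sibRepCap]
        linarith
    · constructor
      · simp only [hf, liftFlow]
        exact div_nonneg (hg0 _ _) hPpos.le
      · have h0 : (cs u.1 v.1 : ℝ) = 0 := by
          rw [hcs u.1 v.1 (fun h => v.2 h.2)]; simp
        have hx := hxS u.1 v.1 (Or.inl u.2)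
        simp only [hf, liftFlow, sibRepCap]
        linarith
    · have hr : 0 ≤ ratio (c u.1 v.1) (cs u.1 v.1) ∧ ratio (c u.1 v.1) (cs u.1 v.1) ≤ 1 :=
        ratio_nonneg (c u.1 v.1 : ℝ) (cs u.1 v.1 : ℝ) (by positivity) (by positivity)
      have hrb : ratio (c u.1 v.1) (cs u.1 v.1) * (g u.1 v.1 / P) ≤ (c u.1 v.1 : ℝ) ∧
          (1 - ratio (c u.1 v.1) (cs u.1 v.1)) * (g u.1 v.1 / P) ≤ (cs u.1 v.1 : ℝ) :=
        ratio_bound (c u.1 v.1 : ℝ) (cs u.1 v.1 : ℝ) (g u.1 v.1 / P)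
          (by positivity) (by positivity) (div_nonneg (hg0 _ _) hPpos.le)
          (hxS u.1 v.1 (Or.inl u.2))
      have hx0 : 0 ≤ g u.1 v.1 / P := div_nonneg (hg0 _ _) hPpos.le
      constructor
      · refine add_nonneg ?_ ?_
        · split
          · exact mul_nonneg hr.1 hx0
          · exact le_refl 0
        · split
          · exact mul_nonneg (by linarith [hr.2]) hx0
          · exact le_refl 0
      · have hcap : ((sibRepCap c cs S P σ (Sum.inr (u, i)) (Sum.inr (v, j)) : NNReal) : ℝ) =
            (if i = j then (c u.1 v.1 : ℝ) else 0) +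
              (if j = σ u v i then (cs u.1 v.1 : ℝ) else 0) := by
          simp only [sibRepCap, NNReal.coe_add]
          congr 1 <;> split <;> simp
        rw [hcap]
        simp only [hf, liftFlow]
        refine add_le_add ?_ ?_
        · split_ifs with h
          · exact hrb.1
          · exact le_refl 0
        · split_ifs with h
          · exact hrb.2
          · exact le_refl 0
  · -- conservation
    rintro (v | ⟨v, i⟩) hbs hbt
    · have hv_s : v.1 ≠ s := fun h => hbs (congrArg Sum.inl (Subtype.ext h))
      have hv_t : v.1 ≠ t := fun h => hbt (congrArg Sum.inl (Subtype.ext h))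
      rw [hcolV v, hrowV v]
      exact hcons v.1 hv_s hv_t
    · rw [hcolS v i, hrowS v i,
        hcons v.1 (fun h => hs (h ▸ v.2)) (fun h => ht (h ▸ v.2))]
  · -- value
    unfold flowValue
    rw [hrowV ⟨s, hs⟩, hcolV ⟨s, hs⟩]

end helpers

theorem maxFlow_sibRep_eq_maxFlow_reweight {V : Type*} [Fintype V]
    (c cs : V → V → NNReal) (S : Set V) (P : ℕ) (hP : 1 ≤ P)
    (σ : ↥S → ↥S → (Fin P ≃ Fin P))
    (s t : V) (hst : s ≠ t) (hs : s ∉ S) (ht : t ∉ S)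
    (hcs : ∀ u v, ¬(u ∈ S ∧ v ∈ S) → cs u v = 0) :
    maxFlowValue (sibRepCap c cs S P σ) (Sum.inl ⟨s, hs⟩) (Sum.inl ⟨t, ht⟩) =
      maxFlowValue
        (fun u v => if u ∈ S ∨ v ∈ S then (P : NNReal) * (c u v + cs u v) else c u v)
        s t := by
  show maxFlowValue (sibRepCap c cs S P σ) (Sum.inl ⟨s, hs⟩) (Sum.inl ⟨t, ht⟩) =
    maxFlowValue (reweightCap c cs S P) s t
  unfold maxFlowValue
  congr 1
  ext μ
  simp only [Set.mem_setOf_eq]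
  constructor
  · rintro ⟨f, hf, rfl⟩
    obtain ⟨g, hg, hv⟩ := collapse_flow c cs P σ s t hst hs ht f hf
    exact ⟨g, hg, hv⟩
  · rintro ⟨g, hg, rfl⟩
    obtain ⟨f, hf, hv⟩ := lift_flow c cs P hP σ s t hst hs ht hcs g hg
    exact ⟨f, hf, hv⟩

end
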